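/- Let 1 ≤ k ≤ n-1. In the formal power series ring Q[[x]], the identity (sum over t ≥ 0 of D(t) x^t) = (sum over j from 0 to k-1 of C(k-1, j) * C(n-k-1, j) * x^j) / (1-x)^n holds, where D(t) = sum over j from 0 to t of C(n-k-1+j, j) * C(k-1+j, j). -/

import Mathlib

open PowerSeries Finset

private lemma symm_choose (a t : ℕ) : (a + t).choose a = (a + t).choose t := by
  have h := Nat.choose_symm (show a ≤ a + t by omega)
  rw [show a + t - a = t by omega] at h
  exact h.symm

private lemma succ_abs (a t : ℕ) :
    (a + t + 1) * (a + t).choose a = (t + 1) * (a + t + 1).choose a := by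
  have h := Nat.add_one_mul_choose_eq (a + t) t
  have h2 : (a + t + 1).choose a = (a + t + 1).choose (t + 1) := by
    have h3 := Nat.choose_symm (show t + 1 ≤ a + t + 1 by omega)
    rwa [show a + t + 1 - (t + 1) = a by omega] at h3
  rw [symm_choose, h2, h, mul_comm]

private lemma key (a b t j : ℕ) (hj : j ≤ t) :
    (a + t + 1) * ((b + t + 1) *
        (a.choose j * (b.choose j * (a + b + (t - j)).choose (a + b))))
      = ((t + 1) ^ 2 - j ^ 2) *
          (a.choose j * (b.choose j * (a + b + (t + 1 - j)).choose (a + b)))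
        + (j + 1) ^ 2 *
          (a.choose (j + 1) * (b.choose (j + 1) * (a + b + (t - j)).choose (a + b))) := by
  obtain ⟨m, rfl⟩ : ∃ m, t = j + m := ⟨t - j, by omega⟩
  rw [show j + m - j = m by omega, show j + m + 1 - j = m + 1 by omega,
    show (j + m + 1) ^ 2 - j ^ 2 = (m + 1) * (2 * j + m + 1) by
      have h : (j + m + 1) ^ 2 = j ^ 2 + (m + 1) * (2 * j + m + 1) := by ring
      omega]
  set X := (a + b + m).choose (a + b) with hX
  have hB1 : (m + 1) * (a + b + (m + 1)).choose (a + b) = (a + b + m + 1) * X := by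
    have h := Nat.add_one_mul_choose_eq (a + b + m) m
    have e1 : (a + b + m).choose m = X := by
      rw [hX]
      have h4 := Nat.choose_symm (show m ≤ a + b + m by omega)
      rw [show a + b + m - m = a + b by omega] at h4
      exact h4.symm
    have e2 : (a + b + (m + 1)).choose (a + b) = (a + b + m + 1).choose (m + 1) := by
      have h5 := Nat.choose_symm (show m + 1 ≤ a + b + m + 1 by omega)
      rw [show a + b + m + 1 - (m + 1) = a + b by omega] at h5
      rw [show a + b + (m + 1) = a + b + m + 1 by omega, h5]
    rw [e2, ← e1, mul_comm]
    exact h.symm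
  have hA : (j + 1) * a.choose (j + 1) = (a - j) * a.choose j := by
    have h := Nat.choose_succ_right_eq a j
    rw [mul_comm, h, mul_comm]
  have hBb : (j + 1) * b.choose (j + 1) = (b - j) * b.choose j := by
    have h := Nat.choose_succ_right_eq b j
    rw [mul_comm, h, mul_comm]
  have e2 : (j + 1) ^ 2 * (a.choose (j + 1) * (b.choose (j + 1) * X))
      = (a - j) * ((b - j) * (a.choose j * (b.choose j * X))) := by
    calc (j + 1) ^ 2 * (a.choose (j + 1) * (b.choose (j + 1) * X))
        = ((j + 1) * a.choose (j + 1)) * (((j + 1) * b.choose (j + 1)) * X) := by ring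
      _ = ((a - j) * a.choose j) * (((b - j) * b.choose j) * X) := by rw [hA, hBb]
      _ = (a - j) * ((b - j) * (a.choose j * (b.choose j * X))) := by ring
  have e1 : (m + 1) * (2 * j + m + 1) *
        (a.choose j * (b.choose j * (a + b + (m + 1)).choose (a + b)))
      = (2 * j + m + 1) * ((a + b + m + 1) * (a.choose j * (b.choose j * X))) := by
    calc (m + 1) * (2 * j + m + 1) *
          (a.choose j * (b.choose j * (a + b + (m + 1)).choose (a + b)))
        = (2 * j + m + 1) *
            (a.choose j * b.choose j * ((m + 1) * (a + b + (m + 1)).choose (a + b))) := by ring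
      _ = (2 * j + m + 1) * (a.choose j * b.choose j * ((a + b + m + 1) * X)) := by rw [hB1]
      _ = (2 * j + m + 1) * ((a + b + m + 1) * (a.choose j * (b.choose j * X))) := by ring
  rw [e1, e2]
  rcases le_or_gt j a with hja | hja
  · rcases le_or_gt j b with hjb | hjb
    · obtain ⟨p, rfl⟩ : ∃ p, a = j + p := ⟨a - j, by omega⟩
      obtain ⟨q, rfl⟩ : ∃ q, b = j + q := ⟨b - j, by omega⟩
      rw [show j + p - j = p by omega, show j + q - j = q by omega]
      ring
    · rw [Nat.choose_eq_zero_of_lt hjb]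
      simp
  · rw [Nat.choose_eq_zero_of_lt hja]
    simp

private lemma recur (a b t : ℕ) :
    (t + 1) ^ 2 *
        ∑ j ∈ range (t + 1 + 1),
          a.choose j * (b.choose j * (a + b + (t + 1 - j)).choose (a + b))
      = (a + t + 1) * ((b + t + 1) *
          ∑ j ∈ range (t + 1),
            a.choose j * (b.choose j * (a + b + (t - j)).choose (a + b))) := by
  symm
  calc (a + t + 1) * ((b + t + 1) *
          ∑ j ∈ range (t + 1),
            a.choose j * (b.choose j * (a + b + (t - j)).choose (a + b)))
      = ∑ j ∈ range (t + 1), (a + t + 1) * ((b + t + 1) *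
          (a.choose j * (b.choose j * (a + b + (t - j)).choose (a + b)))) := by
        simp only [Finset.mul_sum]
    _ = ∑ j ∈ range (t + 1),
          (((t + 1) ^ 2 - j ^ 2) *
              (a.choose j * (b.choose j * (a + b + (t + 1 - j)).choose (a + b)))
            + (j + 1) ^ 2 *
              (a.choose (j + 1) * (b.choose (j + 1) *
                (a + b + (t + 1 - (j + 1))).choose (a + b)))) := by
        refine Finset.sum_congr rfl fun j hj => ?_
        rw [show t + 1 - (j + 1) = t - j by omega]
        exact key a b t j (by have := Finset.mem_range.mp hj; omega)
    _ = (∑ j ∈ range (t + 1), ((t + 1) ^ 2 - j ^ 2) *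
            (a.choose j * (b.choose j * (a + b + (t + 1 - j)).choose (a + b))))
        + ∑ j ∈ range (t + 1), (j + 1) ^ 2 *
            (a.choose (j + 1) * (b.choose (j + 1) *
              (a + b + (t + 1 - (j + 1))).choose (a + b))) := Finset.sum_add_distrib
    _ = (∑ j ∈ range (t + 1 + 1), ((t + 1) ^ 2 - j ^ 2) *
            (a.choose j * (b.choose j * (a + b + (t + 1 - j)).choose (a + b))))
        + ∑ j ∈ range (t + 1 + 1), j ^ 2 *
            (a.choose j * (b.choose j * (a + b + (t + 1 - j)).choose (a + b))) := by
        rw [Finset.sum_range_succ (fun j => ((t + 1) ^ 2 - j ^ 2) *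
            (a.choose j * (b.choose j * (a + b + (t + 1 - j)).choose (a + b)))) (t + 1),
          Finset.sum_range_succ' (fun j => j ^ 2 *
            (a.choose j * (b.choose j * (a + b + (t + 1 - j)).choose (a + b)))) (t + 1)]
        simp
    _ = ∑ j ∈ range (t + 1 + 1), (t + 1) ^ 2 *
          (a.choose j * (b.choose j * (a + b + (t + 1 - j)).choose (a + b))) := by
        rw [← Finset.sum_add_distrib]
        refine Finset.sum_congr rfl fun j hj => ?_
        have hj' : j ≤ t + 1 := by
          have := Finset.mem_range.mp hj; omega
        have hle : j ^ 2 ≤ (t + 1) ^ 2 := Nat.pow_le_pow_left hj' 2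
        rw [← add_mul, Nat.sub_add_cancel hle]
    _ = (t + 1) ^ 2 *
          ∑ j ∈ range (t + 1 + 1),
            a.choose j * (b.choose j * (a + b + (t + 1 - j)).choose (a + b)) := by
        rw [Finset.mul_sum]

private lemma closed_form (a b t : ℕ) :
    ∑ j ∈ range (t + 1), a.choose j * (b.choose j * (a + b + (t - j)).choose (a + b))
      = (a + t).choose a * (b + t).choose b := by
  induction t with
  | zero => simp
  | succ t ih =>
    have h := recur a b t
    rw [ih] at h
    have h2 : (a + t + 1) * ((b + t + 1) * ((a + t).choose a * (b + t).choose b))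
        = (t + 1) ^ 2 * ((a + t + 1).choose a * (b + t + 1).choose b) := by
      have ha := succ_abs a t
      have hb := succ_abs b t
      calc (a + t + 1) * ((b + t + 1) * ((a + t).choose a * (b + t).choose b))
          = ((a + t + 1) * (a + t).choose a) * ((b + t + 1) * (b + t).choose b) := by ring
        _ = ((t + 1) * (a + t + 1).choose a) * ((t + 1) * (b + t + 1).choose b) := by
            rw [ha, hb]
        _ = (t + 1) ^ 2 * ((a + t + 1).choose a * (b + t + 1).choose b) := by ring
    rw [h2] at h
    exact Nat.eq_of_mul_eq_mul_left (by positivity) h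

/-- The generating function of the Ehrhart polynomial of the minimal matroid T_{k,n}
equals the h*-polynomial divided by (1-x)^n, in ℚ⟦x⟧. -/
theorem hstar_generating_function (n k : ℕ) (hk : 1 ≤ k) (hkn : k ≤ n - 1) :
    (PowerSeries.mk fun t : ℕ =>
        (∑ j ∈ Finset.range (t + 1),
          ((n - k - 1 + j).choose j * (k - 1 + j).choose j : ℚ))) =
      (∑ j ∈ Finset.range k,
          ((k - 1).choose j * (n - k - 1).choose j : ℚ) • (PowerSeries.X : ℚ⟦X⟧) ^ j) *
        ((1 - (PowerSeries.X : ℚ⟦X⟧)) ^ n)⁻¹ := by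
  obtain ⟨b, rfl⟩ : ∃ b, k = b + 1 := ⟨k - 1, by omega⟩
  obtain ⟨a, rfl⟩ : ∃ a, n = a + b + 2 := ⟨n - b - 2, by omega⟩
  simp only [show ∀ j : ℕ, a + b + 2 - (b + 1) - 1 + j = a + j from fun j => by omega,
    show ∀ j : ℕ, b + 1 - 1 + j = b + j from fun j => by omega,
    show a + b + 2 - (b + 1) - 1 = a by omega, show b + 1 - 1 = b by omega]
  rw [PowerSeries.eq_mul_inv_iff_mul_eq]
  · have hD : (PowerSeries.mk fun t : ℕ =>
          ∑ j ∈ Finset.range (t + 1), ((a + j).choose j * (b + j).choose j : ℚ))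
        = (PowerSeries.mk fun t : ℕ => ((a + t).choose t * (b + t).choose t : ℚ))
            * (mk 1 : ℚ⟦X⟧) := by
      ext t
      rw [coeff_mul, Finset.Nat.sum_antidiagonal_eq_sum_range_succ_mk]
      simp [coeff_mk]
    have hF : (PowerSeries.mk fun t : ℕ => ((a + t).choose t * (b + t).choose t : ℚ))
        = (∑ j ∈ Finset.range (b + 1),
              ((b.choose j : ℚ) * (a.choose j : ℚ)) • (PowerSeries.X : ℚ⟦X⟧) ^ j)
            * (PowerSeries.mk fun t : ℕ => ((a + b + t).choose (a + b) : ℚ)) := by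
      ext t
      rw [coeff_mul, Finset.Nat.sum_antidiagonal_eq_sum_range_succ_mk]
      have hcoeff : ∀ i : ℕ,
          (coeff i) (∑ j ∈ Finset.range (b + 1),
              ((b.choose j : ℚ) * (a.choose j : ℚ)) • (PowerSeries.X : ℚ⟦X⟧) ^ j)
            = if i ≤ b then (b.choose i : ℚ) * (a.choose i : ℚ) else 0 := by
        intro i
        rw [map_sum]
        simp only [coeff_smul, coeff_X_pow, smul_eq_mul, mul_ite, mul_one, mul_zero]
        rw [Finset.sum_ite_eq]
        simp [Nat.lt_succ_iff]
      simp only [hcoeff, coeff_mk]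
      have hterm : ∀ i ∈ Finset.range (t + 1),
          (if i ≤ b then (b.choose i : ℚ) * (a.choose i : ℚ) else 0)
              * ((a + b + (t - i)).choose (a + b) : ℚ)
            = ((a.choose i * (b.choose i * (a + b + (t - i)).choose (a + b)) : ℕ) : ℚ) := by
        intro i _
        by_cases hib : i ≤ b
        · rw [if_pos hib]
          push_cast
          ring
        · rw [if_neg hib, Nat.choose_eq_zero_of_lt (by omega : b < i)]
          simp
      rw [Finset.sum_congr rfl hterm, ← Nat.cast_sum]
      have h := closed_form a b t
      rw [symm_choose a t, symm_choose b t] at h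
      exact_mod_cast h.symm
    rw [hD, hF, show a + b + 2 = (a + b + 1) + 1 by omega, pow_succ]
    have h1 : (PowerSeries.mk fun t : ℕ => ((a + b + t).choose (a + b) : ℚ))
        * (1 - PowerSeries.X : ℚ⟦X⟧) ^ (a + b + 1) = 1 :=
      mk_add_choose_mul_one_sub_pow_eq_one ℚ (a + b)
    calc ((∑ j ∈ Finset.range (b + 1),
              ((b.choose j : ℚ) * (a.choose j : ℚ)) • (PowerSeries.X : ℚ⟦X⟧) ^ j)
            * (PowerSeries.mk fun t : ℕ => ((a + b + t).choose (a + b) : ℚ)))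
          * (mk 1 : ℚ⟦X⟧) * ((1 - PowerSeries.X : ℚ⟦X⟧) ^ (a + b + 1) * (1 - PowerSeries.X))
        = (∑ j ∈ Finset.range (b + 1),
              ((b.choose j : ℚ) * (a.choose j : ℚ)) • (PowerSeries.X : ℚ⟦X⟧) ^ j)
            * (((PowerSeries.mk fun t : ℕ => ((a + b + t).choose (a + b) : ℚ))
                * (1 - PowerSeries.X : ℚ⟦X⟧) ^ (a + b + 1))
              * ((mk 1 : ℚ⟦X⟧) * (1 - PowerSeries.X))) := by ring
      _ = _ := by rw [h1, mk_one_mul_one_sub_eq_one]; ring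
  · simp
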